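/- Let Y be a hereditarily indecomposable Banach space, W a Banach space, and Z an infinite-dimensional closed subspace of Y. A bounded linear operator S : Y → W is strictly singular if and only if its restriction to Z is strictly singular. -/

import Mathlib

open Filter Topology

noncomputable section

variable {E F : Type*}

def IsInfDimClosed [NormedAddCommGroup E] [NormedSpace ℂ E] (M : Submodule ℂ E) : Prop :=
  IsClosed (M : Set E) ∧ ¬ FiniteDimensional ℂ M

def HI (E : Type*) [NormedAddCommGroup E] [NormedSpace ℂ E] : Prop :=
  ∀ M N : Submodule ℂ E, IsInfDimClosed M → IsInfDimClosed N → ∀ ε > 0,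
    ∃ u ∈ M, ∃ v ∈ N, ‖u‖ = 1 ∧ ‖v‖ = 1 ∧ ‖u - v‖ ≤ ε

def StrictlySingular [NormedAddCommGroup E] [NormedSpace ℂ E]
    [NormedAddCommGroup F] [NormedSpace ℂ F] (S : E →L[ℂ] F) : Prop :=
  ∀ M : Submodule ℂ E, IsInfDimClosed M → ∀ c > 0, ∃ x ∈ M, ‖S x‖ < c * ‖x‖

def IsNBasic2 [NormedAddCommGroup E] [NormedSpace ℂ E] (y : ℕ → E) : Prop :=
  (∀ i, ‖y i‖ = 1) ∧ ∀ (a : ℕ → ℂ) (m n : ℕ), m ≤ n →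
    ‖∑ i ∈ Finset.range m, a i • y i‖ ≤ 2 * ‖∑ i ∈ Finset.range n, a i • y i‖

def IsBlockOf [NormedAddCommGroup E] [NormedSpace ℂ E] (w z : ℕ → E) : Prop :=
  ∃ (a : ℕ → ℂ) (F : ℕ → Finset ℕ), (∀ k, (F k).Nonempty) ∧
    (∀ k i j, i ∈ F k → j ∈ F (k+1) → i < j) ∧
    (∀ k, w k = ∑ i ∈ F k, a i • z i) ∧ (∀ k, w k ≠ 0)

def IsNBlockOf [NormedAddCommGroup E] [NormedSpace ℂ E] (w z : ℕ → E) : Prop :=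
  IsBlockOf w z ∧ ∀ k, ‖w k‖ = 1

def cSpan [NormedAddCommGroup E] [NormedSpace ℂ E] (y : ℕ → E) : Submodule ℂ E :=
  (Submodule.span ℂ (Set.range y)).topologicalClosure

def tailSpan [NormedAddCommGroup E] [NormedSpace ℂ E] (y : ℕ → E) (k : ℕ) : Submodule ℂ E :=
  cSpan (fun i => y (i + k))

theorem mem_cSpan [NormedAddCommGroup E] [NormedSpace ℂ E] (y : ℕ → E) (i : ℕ) :
    y i ∈ cSpan y :=
  (Submodule.span ℂ (Set.range y)).le_topologicalClosure (Submodule.subset_span ⟨i, rfl⟩)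

theorem tailSpan_le [NormedAddCommGroup E] [NormedSpace ℂ E] (y : ℕ → E) (k : ℕ) :
    tailSpan y k ≤ cSpan y :=
  Submodule.topologicalClosure_mono (Submodule.span_mono (by rintro _ ⟨i, rfl⟩; exact ⟨i + k, rfl⟩))

def inclCLM [NormedAddCommGroup E] [NormedSpace ℂ E] {M N : Submodule ℂ E} (h : M ≤ N) :
    M →L[ℂ] N :=
  LinearMap.mkContinuous (Submodule.inclusion h) 1 (by
    intro x
    simp [Submodule.inclusion])

set_option linter.unusedSectionVars false

section AuxSS

variable {Y W : Type*} [NormedAddCommGroup Y] [NormedSpace ℂ Y] [CompleteSpace Y]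
  [NormedAddCommGroup W] [NormedSpace ℂ W] [CompleteSpace W]

lemma infdim_inf_ker (V : Submodule ℂ Y) (hV : ¬ FiniteDimensional ℂ V) (f : Y →L[ℂ] ℂ) :
    ¬ FiniteDimensional ℂ ↥(V ⊓ LinearMap.ker (f : Y →ₗ[ℂ] ℂ)) := by
  intro h
  apply hV
  by_cases hf : ∀ x ∈ V, f x = 0
  · have : V ⊓ LinearMap.ker (f : Y →ₗ[ℂ] ℂ) = V := inf_eq_left.mpr fun x hx => LinearMap.mem_ker.mpr (hf x hx)
    rwa [this] at h
  · push_neg at hf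
    obtain ⟨v, hvV, hv0⟩ := hf
    have hle : V ≤ (V ⊓ LinearMap.ker (f : Y →ₗ[ℂ] ℂ)) ⊔ (ℂ ∙ v) := by
      intro x hx
      have hxeq : x = (x - (f x / f v) • v) + (f x / f v) • v := by abel
      rw [hxeq]
      refine Submodule.add_mem_sup ⟨Submodule.sub_mem _ hx (Submodule.smul_mem _ _ hvV), ?_⟩
        (Submodule.smul_mem _ _ (Submodule.mem_span_singleton_self v))
      simp [LinearMap.mem_ker, map_sub, map_smul, div_mul_cancel₀ _ hv0]
    exact Submodule.finiteDimensional_of_le hle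

lemma closed_inf_ker (V : Submodule ℂ Y) (hV : IsClosed (V : Set Y)) (f : Y →L[ℂ] ℂ) :
    IsClosed ((V ⊓ LinearMap.ker (f : Y →ₗ[ℂ] ℂ) : Submodule ℂ Y) : Set Y) := by
  have : ((V ⊓ LinearMap.ker (f : Y →ₗ[ℂ] ℂ) : Submodule ℂ Y) : Set Y) = (V : Set Y) ∩ (LinearMap.ker (f : Y →ₗ[ℂ] ℂ) : Set Y) := rfl
  rw [this]
  exact hV.inter (ContinuousLinearMap.isClosed_ker f)

lemma exists_step (S : Y →L[ℂ] W) (Z : Submodule ℂ Y)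
    (hS : StrictlySingular (S.comp Z.subtypeL))
    (V : Submodule ℂ Y) (hV : IsInfDimClosed V) (hVZ : V ≤ Z) (ε : ℝ) (hε : 0 < ε) :
    ∃ (z : Y) (f : Y →L[ℂ] ℂ), z ∈ V ∧ ‖z‖ = 1 ∧ ‖S z‖ ≤ ε ∧ ‖f‖ ≤ 1 ∧ f z = 1 := by
  set V' : Submodule ℂ ↥Z := V.comap Z.subtype with hV'
  have hclosed : IsClosed (V' : Set ↥Z) := hV.1.preimage continuous_subtype_val
  have hinf : ¬ FiniteDimensional ℂ V' := by
    intro h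
    apply hV.2
    have hmap : V'.map Z.subtype = V := by
      rw [hV', Submodule.map_comap_subtype, inf_eq_right.mpr hVZ]
    have : FiniteDimensional ℂ (V'.map Z.subtype) := Module.Finite.map _ _
    rwa [hmap] at this
  obtain ⟨x, hxV', hx⟩ := hS V' ⟨hclosed, hinf⟩ ε hε
  have hx0 : (0:ℝ) < ‖x‖ := by
    by_contra h
    push_neg at h
    have : ‖x‖ = 0 := le_antisymm h (norm_nonneg x)
    rw [this, mul_zero] at hx
    exact absurd hx (not_lt.mpr (norm_nonneg _))
  have hxY : ‖(x:Y)‖ = ‖x‖ := rfl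
  set z : Y := ((‖(x:Y)‖⁻¹ : ℝ) : ℂ) • (x : Y) with hz
  have hnc : ‖((‖(x:Y)‖⁻¹ : ℝ) : ℂ)‖ = ‖x‖⁻¹ := by
    rw [Complex.norm_real, Real.norm_eq_abs, abs_of_nonneg (inv_nonneg.mpr (norm_nonneg _)), hxY]
  have hzV : z ∈ V := Submodule.smul_mem _ _ hxV'
  have hz1 : ‖z‖ = 1 := by
    rw [hz, norm_smul, hnc, hxY, inv_mul_cancel₀ hx0.ne']
  have hSz : ‖S z‖ ≤ ε := by
    have : S z = ((‖(x:Y)‖⁻¹ : ℝ) : ℂ) • S (x:Y) := by rw [hz, map_smul]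
    rw [this, norm_smul, hnc]
    have hSx : ‖S (x:Y)‖ < ε * ‖x‖ := hx
    rw [inv_mul_le_iff₀ hx0]
    exact le_of_lt (by linarith [hSx])
  obtain ⟨f, hf1, hfz⟩ := exists_dual_vector ℂ z (by rw [← norm_ne_zero_iff, hz1]; norm_num)
  exact ⟨z, f, hzV, hz1, hSz, le_of_eq hf1, by rw [hfz, hz1]; norm_num⟩

lemma exists_small_subspace (S : Y →L[ℂ] W) (Z : Submodule ℂ Y) (hZ : IsInfDimClosed Z)
    (hS : StrictlySingular (S.comp Z.subtypeL)) (δ : ℝ) (hδ : 0 < δ) :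
    ∃ N : Submodule ℂ Y, IsInfDimClosed N ∧ ∀ x ∈ N, ‖S x‖ ≤ δ * ‖x‖ := by
  classical
  set ε : ℕ → ℝ := fun n => δ / 2 * (4:ℝ)⁻¹ ^ n with hεdef
  have hεpos : ∀ n, 0 < ε n := fun n => by
    have : (0:ℝ) < (4:ℝ)⁻¹ ^ n := by positivity
    simp only [hεdef]; positivity
  have hchoice : ∀ (p : {p : Submodule ℂ Y // IsInfDimClosed p ∧ p ≤ Z}) (n : ℕ),
      ∃ (z : Y) (f : Y →L[ℂ] ℂ), z ∈ p.1 ∧ ‖z‖ = 1 ∧ ‖S z‖ ≤ ε n ∧ ‖f‖ ≤ 1 ∧ f z = 1 :=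
    fun p n => exists_step S Z hS p.1 p.2.1 p.2.2 (ε n) (hεpos n)
  choose zf ff hmem hnorm hSsmall hfnorm hfz using hchoice
  let next : ℕ → {p : Submodule ℂ Y // IsInfDimClosed p ∧ p ≤ Z} →
      {p : Submodule ℂ Y // IsInfDimClosed p ∧ p ≤ Z} := fun n p =>
    ⟨p.1 ⊓ LinearMap.ker (ff p n : Y →ₗ[ℂ] ℂ),
      ⟨closed_inf_ker _ p.2.1.1 _, infdim_inf_ker _ p.2.1.2 _⟩,
      le_trans inf_le_left p.2.2⟩
  let V : ℕ → {p : Submodule ℂ Y // IsInfDimClosed p ∧ p ≤ Z} :=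
    fun n => Nat.rec ⟨Z, hZ, le_rfl⟩ (fun n p => next n p) n
  have hVsucc : ∀ n, (V (n+1)).1 = (V n).1 ⊓ LinearMap.ker (ff (V n) n : Y →ₗ[ℂ] ℂ) := fun n => rfl
  set z : ℕ → Y := fun n => zf (V n) n with hzdef
  set f : ℕ → (Y →L[ℂ] ℂ) := fun n => ff (V n) n with hfdef
  have hzmem : ∀ n, z n ∈ (V n).1 := fun n => hmem (V n) n
  have hz1 : ∀ n, ‖z n‖ = 1 := fun n => hnorm (V n) n
  have hzS : ∀ n, ‖S (z n)‖ ≤ ε n := fun n => hSsmall (V n) n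
  have hf1 : ∀ n, ‖f n‖ ≤ 1 := fun n => hfnorm (V n) n
  have hfz1 : ∀ n, f n (z n) = 1 := fun n => hfz (V n) n
  have hmono : ∀ n m, n ≤ m → (V m).1 ≤ (V n).1 := by
    intro n m h
    induction m, h using Nat.le_induction with
    | base => exact le_rfl
    | succ m hm ih => exact le_trans (by rw [hVsucc]; exact inf_le_left) ih
  have hker : ∀ n m, n < m → f n (z m) = 0 := by
    intro n m h
    have h1 : z m ∈ (V (n+1)).1 := hmono (n+1) m h (hzmem m)
    rw [hVsucc] at h1
    exact h1.2
  -- bound on evaluations of f m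
  have hfx : ∀ m (x : Y), ‖f m x‖ ≤ ‖x‖ := by
    intro m x
    calc ‖f m x‖ ≤ ‖f m‖ * ‖x‖ := (f m).le_opNorm x
    _ ≤ 1 * ‖x‖ := by gcongr; exact hf1 m
    _ = ‖x‖ := one_mul _
  -- linear independence
  have hli : LinearIndependent ℂ z := by
    rw [linearIndependent_iff']
    intro s g hsum i his
    by_contra hgi
    set t := s.filter (fun j => g j ≠ 0) with ht
    have htne : t.Nonempty := ⟨i, Finset.mem_filter.mpr ⟨his, hgi⟩⟩
    set m := t.min' htne with hm
    have hmt : m ∈ t := Finset.min'_mem t htne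
    have hms : m ∈ s := (Finset.mem_filter.mp hmt).1
    have h0 : (f m) (∑ j ∈ s, g j • z j) = 0 := by rw [hsum]; simp
    rw [map_sum] at h0
    have hterm : ∀ j ∈ s, j ≠ m → (f m) (g j • z j) = 0 := by
      intro j hjs hjm
      by_cases hgj : g j = 0
      · simp [hgj]
      · have hjt : j ∈ t := Finset.mem_filter.mpr ⟨hjs, hgj⟩
        have : m < j := lt_of_le_of_ne (Finset.min'_le t j hjt) (Ne.symm hjm)
        rw [map_smul, hker m j this, smul_zero]
    rw [Finset.sum_eq_single m hterm (fun h => absurd hms h)] at h0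
    rw [map_smul, hfz1, smul_eq_mul, mul_one] at h0
    exact (Finset.mem_filter.mp hmt).2 h0
  set N : Submodule ℂ Y := (Submodule.span ℂ (Set.range z)).topologicalClosure with hN
  have hmemN : ∀ i, z i ∈ N :=
    fun i => (Submodule.span ℂ (Set.range z)).le_topologicalClosure (Submodule.subset_span ⟨i, rfl⟩)
  refine ⟨N, ⟨Submodule.isClosed_topologicalClosure _, ?_⟩, ?_⟩
  · -- infinite-dimensional
    intro h
    have hli2 : LinearIndependent ℂ (fun i : ℕ => (⟨z i, hmemN i⟩ : N)) :=
      LinearIndependent.of_comp N.subtype hli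
    exact Module.Finite.not_linearIndependent_of_infinite _ hli2
  · -- the norm bound; first on the span
    have hgeo : ∀ m, (1:ℝ) + ∑ i ∈ Finset.range m, 2^i = 2^m := by
      intro m
      induction m with
      | zero => simp
      | succ m ih => rw [Finset.sum_range_succ, ← add_assoc, ih, pow_succ]; ring
    have hspan : ∀ x ∈ Submodule.span ℂ (Set.range z), ‖S x‖ ≤ δ * ‖x‖ := by
      intro x hx
      obtain ⟨c, hc⟩ := Finsupp.mem_span_range_iff_exists_finsupp.mp hx
      set n := (c.support.sup id) + 1 with hn
      have hsub : c.support ⊆ Finset.range n := by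
        intro i hi
        exact Finset.mem_range.mpr (Nat.lt_succ_of_le (Finset.le_sup (f := id) hi))
      have hxeq : x = ∑ i ∈ Finset.range n, c i • z i := by
        rw [← hc, Finsupp.sum_of_support_subset c hsub (fun i a => a • z i)
          (fun i _ => zero_smul ℂ (z i))]
      -- coefficient bound
      have hcoef : ∀ m, ‖c m‖ ≤ 2^m * ‖x‖ := by
        intro m
        induction m using Nat.strong_induction_on with
        | _ m ih =>
        by_cases hcm : c m = 0
        · rw [hcm, norm_zero]; positivity
        · have hmn : m < n := Finset.mem_range.mp (hsub (Finsupp.mem_support_iff.mpr hcm))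
          have hfmx : f m x = (∑ i ∈ Finset.range m, c i • f m (z i)) + c m := by
            rw [hxeq, map_sum]
            simp_rw [map_smul]
            rw [← Finset.sum_subset (Finset.range_subset_range.mpr hmn)
              (fun i hi hni => by
                have : m < i := by
                  rcases Nat.lt_or_ge i (m+1) with h | h
                  · exact absurd (Finset.mem_range.mpr h) hni
                  · exact h
                rw [hker m i this, smul_zero])]
            rw [Finset.sum_range_succ, hfz1, smul_eq_mul, mul_one]
          have hcmval : c m = f m x - ∑ i ∈ Finset.range m, c i • f m (z i) := by
            rw [hfmx]; ring
          rw [hcmval]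
          calc ‖f m x - ∑ i ∈ Finset.range m, c i • f m (z i)‖
              ≤ ‖f m x‖ + ‖∑ i ∈ Finset.range m, c i • f m (z i)‖ := norm_sub_le _ _
            _ ≤ ‖x‖ + ∑ i ∈ Finset.range m, ‖c i • f m (z i)‖ := by
                gcongr
                · exact hfx m x
                · exact norm_sum_le _ _
            _ ≤ ‖x‖ + ∑ i ∈ Finset.range m, 2^i * ‖x‖ := by
                gcongr with i hi
                rw [norm_smul]
                calc ‖c i‖ * ‖f m (z i)‖ ≤ (2^i * ‖x‖) * ‖z i‖ := by
                      gcongr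
                      · exact ih i (Finset.mem_range.mp hi)
                      · exact hfx m (z i)
                  _ = 2^i * ‖x‖ := by rw [hz1, mul_one]
            _ = (1 + ∑ i ∈ Finset.range m, 2^i) * ‖x‖ := by rw [add_mul, one_mul, Finset.sum_mul]
            _ = 2^m * ‖x‖ := by rw [hgeo]
      -- final estimate
      have hSx : S x = ∑ i ∈ Finset.range n, c i • S (z i) := by
        rw [hxeq, map_sum]; simp_rw [map_smul]
      calc ‖S x‖ ≤ ∑ i ∈ Finset.range n, ‖c i • S (z i)‖ := by rw [hSx]; exact norm_sum_le _ _
        _ ≤ ∑ i ∈ Finset.range n, (δ/2 * (1/2)^i) * ‖x‖ := by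
            refine Finset.sum_le_sum fun i _ => ?_
            rw [norm_smul]
            calc ‖c i‖ * ‖S (z i)‖ ≤ (2^i * ‖x‖) * (δ/2 * (4:ℝ)⁻¹^i) := by
                  gcongr
                  · exact hcoef i
                  · exact hzS i
              _ = (δ/2 * (1/2)^i) * ‖x‖ := by
                  rw [show ((1:ℝ)/2)^i = 2^i * (4:ℝ)⁻¹^i by
                    rw [← mul_pow]; norm_num]
                  ring
        _ = (δ/2) * (∑ i ∈ Finset.range n, (1/2:ℝ)^i) * ‖x‖ := by
            rw [← Finset.sum_mul, ← Finset.mul_sum]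
        _ ≤ (δ/2) * 2 * ‖x‖ := by
            gcongr
            exact sum_geometric_two_le n
        _ = δ * ‖x‖ := by ring
    -- extend to the closure
    intro x hx
    have hclosed : IsClosed {x : Y | ‖S x‖ ≤ δ * ‖x‖} :=
      isClosed_le (S.continuous.norm) (continuous_const.mul continuous_norm)
    have : (N : Set Y) ⊆ {x : Y | ‖S x‖ ≤ δ * ‖x‖} := by
      rw [hN, Submodule.topologicalClosure_coe]
      exact closure_minimal hspan hclosed
    exact this hx

end AuxSS

theorem statement1 {Y W : Type*} [NormedAddCommGroup Y] [NormedSpace ℂ Y] [CompleteSpace Y]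
    [NormedAddCommGroup W] [NormedSpace ℂ W] [CompleteSpace W]
    (hY : HI Y) (S : Y →L[ℂ] W) (Z : Submodule ℂ Y) (hZ : IsInfDimClosed Z) :
    StrictlySingular S ↔ StrictlySingular (S.comp Z.subtypeL) := by
  constructor
  · intro hS M hM c hc
    set M' : Submodule ℂ Y := M.map Z.subtype with hM'
    have hclosed : IsClosed (M' : Set Y) := by
      have : (M' : Set Y) = Subtype.val '' (M : Set ↥Z) := rfl
      rw [this]
      exact (hZ.1.isClosedEmbedding_subtypeVal.isClosedMap) _ hM.1
    have hinf : ¬ FiniteDimensional ℂ M' := by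
      intro h
      exact hM.2 (Module.Finite.equiv
        (Submodule.equivMapOfInjective Z.subtype Z.injective_subtype M).symm)
    obtain ⟨x, hxM', hx⟩ := hS M' ⟨hclosed, hinf⟩ c hc
    obtain ⟨m, hmM, hmx⟩ := Submodule.mem_map.mp hxM'
    refine ⟨m, hmM, ?_⟩
    have h1 : (S.comp Z.subtypeL) m = S x := by
      rw [← hmx]; rfl
    have h2 : ‖m‖ = ‖x‖ := by rw [← hmx]; rfl
    rw [h1, h2]
    exact hx
  · intro hS M hM c hc
    obtain ⟨N, hN, hNb⟩ := exists_small_subspace S Z hZ hS (c/4) (by positivity)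
    have hSpos : (0:ℝ) < ‖S‖ + 1 := by positivity
    set ε : ℝ := c / (4 * (‖S‖ + 1)) with hε
    have hεpos : 0 < ε := by positivity
    obtain ⟨u, huM, v, hvN, hu1, hv1, huv⟩ := hY M N hM hN ε hεpos
    refine ⟨u, huM, ?_⟩
    have key : ‖S u‖ ≤ c/4 + c/4 := by
      calc ‖S u‖ = ‖S v + S (u - v)‖ := by rw [map_sub]; rw [add_sub_cancel]
        _ ≤ ‖S v‖ + ‖S (u - v)‖ := norm_add_le _ _
        _ ≤ (c/4) * ‖v‖ + ‖S‖ * ‖u - v‖ := by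
            gcongr
            · exact hNb v hvN
            · exact S.le_opNorm _
        _ ≤ (c/4) * 1 + (‖S‖ + 1) * ε := by
            rw [hv1]
            exact add_le_add le_rfl
              (mul_le_mul (by linarith) huv (norm_nonneg _) (le_of_lt hSpos))
        _ = c/4 + c/4 := by
            rw [hε]; field_simp
    rw [hu1, mul_one]
    linarith
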